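/- Pathwise iterated Azéma–Yor inequality: Let x : [0,1] → ℝ be a càdlàg path with running maximum x*_t := sup_{0≤s≤t} x_s. Then for every m > x_0 and reals ζ₁ ≤ ζ₂ ≤ … ≤ ζₙ < m, and time points 0 ≤ t₁ < … < tₙ ≤ 1: 1_{x*_{tₙ} ≥ m} ≤ Σ_{i=1}^{n} [ (x_{tᵢ} − ζᵢ)⁺/(m − ζᵢ) + 1_{x*_{t_{i−1}} < m ≤ x*_{tᵢ}} · (m − x_{tᵢ})/(m − ζᵢ) ] − Σ_{i=1}^{n−1} [ (x_{tᵢ} − ζ_{i+1})⁺/(m − ζ_{i+1}) + 1_{m ≤ x*_{tᵢ}, ζ_{i+1} ≤ x_{tᵢ}} · (x_{t_{i+1}} − x_{tᵢ})/(m − ζ_{i+1}) ]. -/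

import Mathlib

open Set Filter Topology

private lemma bdd_above_cadlag (x : ℝ → ℝ)
    (hx_rc : ∀ t, ContinuousWithinAt x (Set.Ici t) t)
    (hx_ll : ∀ t : ℝ, 0 < t → ∃ l : ℝ, Tendsto x (nhdsWithin t (Set.Iio t)) (nhds l))
    (T : ℝ) : BddAbove (x '' Set.Icc 0 T) := by
  have hloc : ∀ u : ℝ, ∃ V ∈ 𝓝 u, BddAbove (x '' (V ∩ Set.Icc 0 T)) := by
    intro u
    have hr : ∀ᶠ s in 𝓝[Set.Ici u] u, x s < x u + 1 :=
      (hx_rc u).eventually_lt_const (by linarith)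
    obtain ⟨O2, hO2o, huO2, hO2⟩ := mem_nhdsWithin.1 hr
    by_cases hu : 0 < u
    · obtain ⟨l, hl⟩ := hx_ll u hu
      have hlft : ∀ᶠ s in 𝓝[Set.Iio u] u, x s < l + 1 :=
        hl.eventually_lt_const (by linarith)
      obtain ⟨O1, hO1o, huO1, hO1⟩ := mem_nhdsWithin.1 hlft
      refine ⟨O1 ∩ O2, (hO1o.inter hO2o).mem_nhds ⟨huO1, huO2⟩, ⟨max (l + 1) (x u + 1), ?_⟩⟩
      rintro y ⟨s, ⟨⟨hs1, hs2⟩, _⟩, rfl⟩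
      rcases lt_or_ge s u with h | h
      · exact le_max_of_le_left (hO1 ⟨hs1, h⟩).le
      · exact le_max_of_le_right (hO2 ⟨hs2, h⟩).le
    · push_neg at hu
      refine ⟨O2, hO2o.mem_nhds huO2, ⟨x u + 1, ?_⟩⟩
      rintro y ⟨s, ⟨hs1, hs2, _⟩, rfl⟩
      exact (hO2 ⟨hs1, le_trans hu hs2⟩).le
  choose V hV hVb using hloc
  obtain ⟨F, hF⟩ := (isCompact_Icc : IsCompact (Set.Icc (0:ℝ) T)).elim_nhds_subcover V
    (fun u _ => hV u)
  have hb : BddAbove (⋃ u ∈ F, x '' (V u ∩ Set.Icc 0 T)) := by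
    apply (Set.Finite.bddAbove_biUnion F.finite_toSet).2
    intro u _; exact hVb u
  refine hb.mono ?_
  rintro y ⟨s, hs, rfl⟩
  obtain ⟨u, huF, hsu⟩ := Set.mem_iUnion₂.1 (hF.2 hs)
  exact Set.mem_iUnion₂.2 ⟨u, huF, ⟨s, ⟨hsu, hs⟩, rfl⟩⟩


private lemma g_nonneg' (a ζ m : ℝ) (h : ζ < m) : 0 ≤ max (a - ζ) 0 / (m - ζ) :=
  div_nonneg (le_max_right _ _) (by linarith)

private lemma mono_g' (a ζ ζ' m : ℝ) (ha : a < m) (h1 : ζ ≤ ζ') (h2 : ζ' < m) :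
    max (a - ζ') 0 / (m - ζ') ≤ max (a - ζ) 0 / (m - ζ) := by
  have hm : (0:ℝ) < m - ζ := by linarith
  have hm' : (0:ℝ) < m - ζ' := by linarith
  rcases le_or_gt a ζ' with h | h
  · rw [max_eq_right (by linarith), zero_div]
    exact g_nonneg' a ζ m (by linarith)
  · rw [max_eq_left (by linarith), max_eq_left (by linarith), div_le_div_iff₀ hm' hm]
    nlinarith

private lemma key1' (a ζ m : ℝ) (h : ζ < m) :
    (1:ℝ) ≤ max (a - ζ) 0 / (m - ζ) + (m - a) / (m - ζ) := by
  rw [← add_div, le_div_iff₀ (by linarith : (0:ℝ) < m - ζ)]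
  have := le_max_left (a - ζ) 0
  nlinarith

private lemma key2' (a b ζ m : ℝ) (h : ζ < m) (hζa : ζ ≤ a) :
    max (a - ζ) 0 / (m - ζ) + (b - a) / (m - ζ) ≤ max (b - ζ) 0 / (m - ζ) := by
  rw [← add_div, div_le_div_iff_of_pos_right (by linarith : (0:ℝ) < m - ζ)]
  have h1 : max (a - ζ) 0 = a - ζ := max_eq_left (by linarith)
  have h2 := le_max_left (b - ζ) 0
  linarith

private lemma azema_key
    (x : ℝ → ℝ) (t : ℕ → ℝ) (ζ : ℕ → ℝ) (m : ℝ) (n : ℕ) (M : ℕ → ℝ)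
    (hxle : ∀ k, 1 ≤ k → k ≤ n → x (t k) ≤ M k)
    (hMmono : ∀ j k, j ≤ k → k ≤ n → M j ≤ M k)
    (hM0 : M 0 < m)
    (hζmono : ∀ i j : ℕ, 1 ≤ i → i ≤ j → j ≤ n → ζ i ≤ ζ j)
    (hζlt : ∀ i : ℕ, 1 ≤ i → i ≤ n → ζ i < m)
    (k : ℕ) (hk1 : 1 ≤ k) (hkn : k ≤ n)
    (ζ' : ℝ) (hζ'1 : ζ k ≤ ζ') (hζ'2 : ζ' < m) :
    (if m ≤ M k then (1:ℝ) else 0)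
      + (if m ≤ M k then 0 else max (x (t k) - ζ') 0 / (m - ζ')) ≤
    (∑ i ∈ Finset.Icc 1 k,
        (max (x (t i) - ζ i) 0 / (m - ζ i)
          + (if M (i-1) < m ∧ m ≤ M i then (m - x (t i)) / (m - ζ i) else 0)))
      - (∑ i ∈ Finset.Icc 1 (k-1),
        (max (x (t i) - ζ (i+1)) 0 / (m - ζ (i+1))
          + (if m ≤ M i ∧ ζ (i+1) ≤ x (t i)
              then (x (t (i+1)) - x (t i)) / (m - ζ (i+1)) else 0))) := by
  revert hkn ζ' hζ'1 hζ'2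
  induction k, hk1 using Nat.le_induction with
  | base =>
    intro hkn ζ' hζ'1 hζ'2
    simp only [Finset.Icc_self, Finset.sum_singleton, Nat.sub_self,
      show (1:ℕ) - 1 = 0 from rfl, show Finset.Icc 1 0 = ∅ from rfl,
      Finset.sum_empty, sub_zero]
    by_cases hc : m ≤ M 1
    · rw [if_pos hc, if_pos hc, if_pos ⟨hM0, hc⟩, add_zero]
      exact key1' (x (t 1)) (ζ 1) m (hζlt 1 le_rfl hkn)
    · rw [if_neg hc, if_neg hc, if_neg (fun h => hc h.2), add_zero, zero_add]
      exact mono_g' (x (t 1)) (ζ 1) ζ' m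
        (lt_of_le_of_lt (hxle 1 le_rfl hkn) (lt_of_not_ge hc)) hζ'1 hζ'2
  | succ k hk ih =>
    intro hkn ζ' hζ'1 hζ'2
    have hkn' : k ≤ n := Nat.le_of_succ_le hkn
    obtain ⟨j, rfl⟩ : ∃ j, k = j + 1 := ⟨k - 1, (Nat.succ_pred_eq_of_pos hk).symm⟩
    have hζk1 : ζ (j+2) < m := hζlt (j+2) (by omega) hkn
    have hζkk : ζ (j+1) ≤ ζ (j+2) := hζmono (j+1) (j+2) hk (Nat.le_succ _) hkn
    have ihk := ih hkn' (ζ (j+2)) hζkk hζk1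
    have eA : (∑ i ∈ Finset.Icc 1 (j+1+1),
        (max (x (t i) - ζ i) 0 / (m - ζ i)
          + (if M (i-1) < m ∧ m ≤ M i then (m - x (t i)) / (m - ζ i) else 0)))
        = (∑ i ∈ Finset.Icc 1 (j+1),
        (max (x (t i) - ζ i) 0 / (m - ζ i)
          + (if M (i-1) < m ∧ m ≤ M i then (m - x (t i)) / (m - ζ i) else 0)))
        + (max (x (t (j+1+1)) - ζ (j+1+1)) 0 / (m - ζ (j+1+1))
          + (if M (j+1+1-1) < m ∧ m ≤ M (j+1+1)
              then (m - x (t (j+1+1))) / (m - ζ (j+1+1)) else 0)) :=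
      Finset.sum_Icc_succ_top (by omega) _
    have eB : (∑ i ∈ Finset.Icc 1 (j+1),
        (max (x (t i) - ζ (i+1)) 0 / (m - ζ (i+1))
          + (if m ≤ M i ∧ ζ (i+1) ≤ x (t i)
              then (x (t (i+1)) - x (t i)) / (m - ζ (i+1)) else 0)))
        = (∑ i ∈ Finset.Icc 1 j,
        (max (x (t i) - ζ (i+1)) 0 / (m - ζ (i+1))
          + (if m ≤ M i ∧ ζ (i+1) ≤ x (t i)
              then (x (t (i+1)) - x (t i)) / (m - ζ (i+1)) else 0)))
        + (max (x (t (j+1)) - ζ (j+1+1)) 0 / (m - ζ (j+1+1))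
          + (if m ≤ M (j+1) ∧ ζ (j+1+1) ≤ x (t (j+1))
              then (x (t (j+1+1)) - x (t (j+1))) / (m - ζ (j+1+1)) else 0)) :=
      Finset.sum_Icc_succ_top (by omega) _
    simp only [Nat.add_sub_cancel] at ihk ⊢
    rw [eA, eB]
    simp only [Nat.add_sub_cancel, show j+1+1 = j+2 from rfl, show j+2-1 = j+1 from rfl]
    have hMk : M (j+1) ≤ M (j+2) := hMmono (j+1) (j+2) (by omega) hkn
    set a := x (t (j+1)) with ha
    set b := x (t (j+2)) with hb
    have main : (if m ≤ M (j+2) then (1:ℝ) else 0)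
        + (if m ≤ M (j+2) then (0:ℝ) else max (b - ζ') 0 / (m - ζ'))
        + (max (a - ζ (j+2)) 0 / (m - ζ (j+2))
          + (if m ≤ M (j+1) ∧ ζ (j+2) ≤ a then (b - a) / (m - ζ (j+2)) else 0))
        ≤ (if m ≤ M (j+1) then (1:ℝ) else 0)
        + (if m ≤ M (j+1) then (0:ℝ) else max (a - ζ (j+2)) 0 / (m - ζ (j+2)))
        + (max (b - ζ (j+2)) 0 / (m - ζ (j+2))
          + (if M (j+1) < m ∧ m ≤ M (j+2) then (m - b) / (m - ζ (j+2)) else 0)) := by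
      by_cases hc1 : m ≤ M (j+1)
      · have hc2 : m ≤ M (j+2) := le_trans hc1 hMk
        have e1 : (if m ≤ M (j+2) then (1:ℝ) else 0) = 1 := if_pos hc2
        have e2 : (if m ≤ M (j+2) then (0:ℝ) else max (b - ζ') 0 / (m - ζ')) = 0 := if_pos hc2
        have e3 : (if m ≤ M (j+1) then (1:ℝ) else 0) = 1 := if_pos hc1
        have e4 : (if m ≤ M (j+1) then (0:ℝ) else max (a - ζ (j+2)) 0 / (m - ζ (j+2))) = 0 :=
          if_pos hc1
        have e5 : (if M (j+1) < m ∧ m ≤ M (j+2)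
            then (m - b) / (m - ζ (j+2)) else (0:ℝ)) = 0 :=
          if_neg (fun h => absurd hc1 (not_le.2 h.1))
        rw [e1, e2, e3, e4, e5]
        by_cases hc3 : ζ (j+2) ≤ a
        · rw [if_pos ⟨hc1, hc3⟩]
          have := key2' a b (ζ (j+2)) m hζk1 hc3
          linarith
        · rw [if_neg (fun h => hc3 h.2),
            max_eq_right (by linarith [not_le.1 hc3] : a - ζ (j+2) ≤ 0), zero_div]
          have := g_nonneg' b (ζ (j+2)) m hζk1
          linarith
      · have e3 : (if m ≤ M (j+1) then (1:ℝ) else 0) = 0 := if_neg hc1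
        have e4 : (if m ≤ M (j+1) then (0:ℝ) else max (a - ζ (j+2)) 0 / (m - ζ (j+2)))
            = max (a - ζ (j+2)) 0 / (m - ζ (j+2)) := if_neg hc1
        have e6 : (if m ≤ M (j+1) ∧ ζ (j+2) ≤ a
            then (b - a) / (m - ζ (j+2)) else (0:ℝ)) = 0 := if_neg (fun h => hc1 h.1)
        rw [e3, e4, e6]
        by_cases hc2 : m ≤ M (j+2)
        · have e1 : (if m ≤ M (j+2) then (1:ℝ) else 0) = 1 := if_pos hc2
          have e2 : (if m ≤ M (j+2) then (0:ℝ) else max (b - ζ') 0 / (m - ζ')) = 0 := if_pos hc2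
          have e5 : (if M (j+1) < m ∧ m ≤ M (j+2)
              then (m - b) / (m - ζ (j+2)) else (0:ℝ)) = (m - b) / (m - ζ (j+2)) :=
            if_pos ⟨not_le.1 hc1, hc2⟩
          rw [e1, e2, e5]
          have := key1' b (ζ (j+2)) m hζk1
          linarith
        · have e1 : (if m ≤ M (j+2) then (1:ℝ) else 0) = 0 := if_neg hc2
          have e2 : (if m ≤ M (j+2) then (0:ℝ) else max (b - ζ') 0 / (m - ζ'))
              = max (b - ζ') 0 / (m - ζ') := if_neg hc2
          have e5 : (if M (j+1) < m ∧ m ≤ M (j+2)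
              then (m - b) / (m - ζ (j+2)) else (0:ℝ)) = 0 := if_neg (fun h => hc2 h.2)
          rw [e1, e2, e5]
          have hblt : b < m := lt_of_le_of_lt (hxle (j+2) (by omega) hkn) (not_le.1 hc2)
          have := mono_g' b (ζ (j+2)) ζ' m hblt hζ'1 hζ'2
          linarith
    linarith


/-- Pathwise iterated Azéma–Yor inequality: for a càdlàg path `x` on `[0,1]` with running
maximum `x*_t = sup_{0 ≤ s ≤ t} x_s`, every `m > x 0`, nondecreasing levels
`ζ₁ ≤ … ≤ ζₙ < m` and times `0 = t₀ < t₁ < … < tₙ ≤ 1`, one has the pathwise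
super-replication inequality for the indicator `1_{x*_{tₙ} ≥ m}`. -/
theorem stmt_3
    (x : ℝ → ℝ)
    (hx_rc : ∀ t, ContinuousWithinAt x (Set.Ici t) t)
    (hx_ll : ∀ t : ℝ, 0 < t → ∃ l : ℝ, Tendsto x (nhdsWithin t (Set.Iio t)) (nhds l))
    (n : ℕ) (hn : 1 ≤ n)
    (t : ℕ → ℝ) (ht0 : t 0 = 0)
    (htm : ∀ i j : ℕ, i < j → j ≤ n → t i < t j) (htn : t n ≤ 1)
    (m : ℝ) (hm : x 0 < m)
    (ζ : ℕ → ℝ)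
    (hζmono : ∀ i j : ℕ, 1 ≤ i → i ≤ j → j ≤ n → ζ i ≤ ζ j)
    (hζlt : ∀ i : ℕ, 1 ≤ i → i ≤ n → ζ i < m) :
    (if m ≤ sSup (x '' Set.Icc 0 (t n)) then (1:ℝ) else 0) ≤
      (∑ i ∈ Finset.Icc 1 n,
        (max (x (t i) - ζ i) 0 / (m - ζ i)
          + (if sSup (x '' Set.Icc 0 (t (i-1))) < m ∧ m ≤ sSup (x '' Set.Icc 0 (t i))
              then (m - x (t i)) / (m - ζ i) else 0)))
      - (∑ i ∈ Finset.Icc 1 (n-1),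
        (max (x (t i) - ζ (i+1)) 0 / (m - ζ (i+1))
          + (if m ≤ sSup (x '' Set.Icc 0 (t i)) ∧ ζ (i+1) ≤ x (t i)
              then (x (t (i+1)) - x (t i)) / (m - ζ (i+1)) else 0))) := by
  have hbdd : ∀ T, BddAbove (x '' Set.Icc 0 T) := bdd_above_cadlag x hx_rc hx_ll
  have htnn : ∀ k, k ≤ n → 0 ≤ t k := by
    intro k hk
    rcases Nat.eq_zero_or_pos k with h | h
    · simp [h, ht0]
    · have := htm 0 k h hk; rw [ht0] at this; linarith
  have hxle : ∀ k, 1 ≤ k → k ≤ n → x (t k) ≤ sSup (x '' Set.Icc 0 (t k)) := by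
    intro k _ hk
    exact le_csSup (hbdd _) ⟨t k, ⟨htnn k hk, le_refl _⟩, rfl⟩
  have hMmono : ∀ j k, j ≤ k → k ≤ n →
      sSup (x '' Set.Icc 0 (t j)) ≤ sSup (x '' Set.Icc 0 (t k)) := by
    intro j k hjk hk
    refine csSup_le_csSup (hbdd _) ⟨x 0, ⟨0, ⟨le_refl _, htnn j (hjk.trans hk)⟩, rfl⟩⟩ ?_
    apply Set.image_mono
    apply Set.Icc_subset_Icc_right
    rcases eq_or_lt_of_le hjk with h | h
    · rw [h]
    · exact (htm j k h hk).le
  have hM0 : sSup (x '' Set.Icc 0 (t 0)) < m := by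
    have e : x '' Set.Icc (0:ℝ) 0 = {x 0} := by rw [Set.Icc_self, Set.image_singleton]
    rw [ht0, e, csSup_singleton]
    exact hm
  have key : (if m ≤ sSup (x '' Set.Icc 0 (t n)) then (1:ℝ) else 0)
      + (if m ≤ sSup (x '' Set.Icc 0 (t n)) then (0:ℝ)
          else max (x (t n) - ζ n) 0 / (m - ζ n)) ≤
      (∑ i ∈ Finset.Icc 1 n,
        (max (x (t i) - ζ i) 0 / (m - ζ i)
          + (if sSup (x '' Set.Icc 0 (t (i-1))) < m ∧ m ≤ sSup (x '' Set.Icc 0 (t i))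
              then (m - x (t i)) / (m - ζ i) else 0)))
      - (∑ i ∈ Finset.Icc 1 (n-1),
        (max (x (t i) - ζ (i+1)) 0 / (m - ζ (i+1))
          + (if m ≤ sSup (x '' Set.Icc 0 (t i)) ∧ ζ (i+1) ≤ x (t i)
              then (x (t (i+1)) - x (t i)) / (m - ζ (i+1)) else 0))) :=
    azema_key x t ζ m n (fun i => sSup (x '' Set.Icc 0 (t i))) hxle hMmono hM0 hζmono hζlt
      n hn le_rfl (ζ n) le_rfl (hζlt n hn le_rfl)
  have hg : 0 ≤ max (x (t n) - ζ n) 0 / (m - ζ n) := g_nonneg' _ _ _ (hζlt n hn le_rfl)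
  by_cases hc : m ≤ sSup (x '' Set.Icc 0 (t n))
  · rw [if_pos hc] at key ⊢
    rw [if_pos hc] at key
    linarith
  · rw [if_neg hc] at key ⊢
    rw [if_neg hc] at key
    linarith
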